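/- Suppose x ↦ f(x,ξ) is convex and differentiable on ℝ^d for every ξ ∈ ℝ^m. Fix x̂ ∈ ℝ^d, a tolerance ε' ≥ 0, and (y_1^ε,…,y_n^ε) ∈ S such that Ĵ(x̂) − (1/n) Σ_{k=1}^n f(x̂, ξ̂_k − y_k^ε) ≤ ε'. Define g := (1/n) Σ_{k=1}^n ∇_x f(x̂, ξ̂_k − y_k^ε), the average of the gradients of x ↦ f(x, ξ̂_k − y_k^ε) at x̂. Then g is an ε'-subgradient of Ĵ at x̂, i.e., for every z ∈ ℝ^d, Ĵ(z) ≥ Ĵ(x̂) + ⟨g, z − x̂⟩ − ε'. -/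

import Mathlib

open scoped BigOperators

noncomputable section

/-- The scaled simplex `Δ := {v ∈ ℝ^{2mn} : v ≥ 0, ∑ᵢ vⁱ = n ε}`, where `ℝ^{2mn}` is
modeled as functions `Fin 2 × Fin n × Fin m → ℝ` (two blocks of `n × m` entries). -/
def simplexSet (m n : ℕ) (ε : ℝ) : Set (Fin 2 × Fin n × Fin m → ℝ) :=
  {v | (∀ p, 0 ≤ v p) ∧ ∑ p, v p = (n : ℝ) * ε}

/-- The linear map `A : ℝ^{2mn} → (ℝ^m)^n`, `(A v)ₖʲ = v^{(k-1)m+j} - v^{(n+k-1)m+j}`,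
i.e. the difference of the two blocks. -/
def Amap (m n : ℕ) (v : Fin 2 × Fin n × Fin m → ℝ) : Fin n → Fin m → ℝ :=
  fun k j => v (0, k, j) - v (1, k, j)

/-- The feasible set `S := {(y₁,…,yₙ) : (1/n) ∑ₖ ‖yₖ‖₁ ≤ ε}`. -/
def feasSet (m n : ℕ) (ε : ℝ) : Set (Fin n → Fin m → ℝ) :=
  {y | (1 / (n : ℝ)) * ∑ k, ∑ j, |y k j| ≤ ε}

open scoped RealInnerProductSpace

lemma subgrad_aux {E : Type*} [NormedAddCommGroup E] [InnerProductSpace ℝ E] [CompleteSpace E]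
    {f : E → ℝ} (hconv : ConvexOn ℝ Set.univ f) (hdiff : Differentiable ℝ f)
    (x z : E) : f x + ⟪gradient f x, z - x⟫ ≤ f z := by
  have hinner : ⟪gradient f x, z - x⟫ = fderiv ℝ f x (z - x) := by
    simp [gradient, InnerProductSpace.toDual_symm_apply]
  set v := z - x with hv
  have hline : HasDerivAt (fun t : ℝ => x + t • v) v 0 := by
    simpa using ((hasDerivAt_id (0:ℝ)).smul_const v).const_add x
  have hcomp : HasDerivAt (fun t : ℝ => f (x + t • v)) (fderiv ℝ f x v) 0 := by
    have hf : HasFDerivAt f (fderiv ℝ f x) (x + (0:ℝ) • v) := by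
      simpa using (hdiff x).hasFDerivAt
    exact hf.comp_hasDerivAt 0 hline
  have hg : ConvexOn ℝ Set.univ (fun t : ℝ => f (x + t • v)) := by
    have := hconv.comp_affineMap (AffineMap.lineMap x z)
    have heq : (f ∘ AffineMap.lineMap x z) = fun t : ℝ => f (x + t • v) := by
      funext t; simp [AffineMap.lineMap_apply, hv, add_comm]
    rw [heq] at this
    simpa using this
  have := hg.le_slope_of_hasDerivAt (Set.mem_univ (0:ℝ)) (Set.mem_univ (1:ℝ))
      one_pos hcomp
  rw [slope_def_field] at this
  simp at this
  have hz : x + v = z := by simp [hv]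
  rw [hz] at this
  rw [hinner]
  linarith

/-- The worst-case certificate function `Ĵ(x) := sup_{y ∈ S} (1/n) ∑ₖ f(x, ξ̂ₖ - yₖ)`. -/
def certFn (m n d : ℕ) (ξ : Fin n → Fin m → ℝ) (ε : ℝ)
    (f : EuclideanSpace ℝ (Fin d) → (Fin m → ℝ) → ℝ) (x : EuclideanSpace ℝ (Fin d)) : ℝ :=
  sSup ((fun y : Fin n → Fin m → ℝ => (1 / (n : ℝ)) * ∑ k, f x (ξ k - y k)) '' feasSet m n ε)

/-- if `x ↦ f(x,ξ)` is convex and differentiable and `(y₁ᵉ,…,yₙᵉ) ∈ S` is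
`ε'`-optimal for the sup defining `Ĵ(xhat)`, then the average `g` of the gradients
`∇ₓ f(xhat, ξ̂ₖ - yₖᵉ)` is an `ε'`-subgradient of `Ĵ` at `xhat`. -/
theorem avg_gradient_is_eps_subgradient (m n d : ℕ) (hm : 0 < m) (hn : 0 < n)
    (ξ : Fin n → Fin m → ℝ) (ε : ℝ) (hε : 0 < ε)
    (f : EuclideanSpace ℝ (Fin d) → (Fin m → ℝ) → ℝ)
    (hconv : ∀ ξ' : Fin m → ℝ, ConvexOn ℝ Set.univ fun x => f x ξ')
    (hdiff : ∀ ξ' : Fin m → ℝ, Differentiable ℝ fun x => f x ξ')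
    (hbdd : ∀ x : EuclideanSpace ℝ (Fin d), BddAbove
      ((fun y : Fin n → Fin m → ℝ => (1 / (n : ℝ)) * ∑ k, f x (ξ k - y k)) '' feasSet m n ε))
    (xhat : EuclideanSpace ℝ (Fin d)) (ε' : ℝ) (hε' : 0 ≤ ε')
    (yε : Fin n → Fin m → ℝ) (hyε : yε ∈ feasSet m n ε)
    (hclose : certFn m n d ξ ε f xhat - (1 / (n : ℝ)) * ∑ k, f xhat (ξ k - yε k) ≤ ε') :
    ∀ z : EuclideanSpace ℝ (Fin d),
      certFn m n d ξ ε f z ≥ certFn m n d ξ ε f xhat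
        + ⟪(1 / (n : ℝ)) • (∑ k, gradient (fun x => f x (ξ k - yε k)) xhat), z - xhat⟫ - ε' := by
  intro z
  have hn' : (0:ℝ) < n := by exact_mod_cast hn
  have hinvn : (0:ℝ) ≤ 1 / (n : ℝ) := by positivity
  have h1 : (1 / (n : ℝ)) * ∑ k, f z (ξ k - yε k) ≤ certFn m n d ξ ε f z :=
    le_csSup (hbdd z) ⟨yε, hyε, rfl⟩
  have h2 : ∀ k, f xhat (ξ k - yε k)
      + ⟪gradient (fun x => f x (ξ k - yε k)) xhat, z - xhat⟫ ≤ f z (ξ k - yε k) :=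
    fun k => subgrad_aux (hconv _) (hdiff _) xhat z
  have hsum : ∑ k, f xhat (ξ k - yε k)
      + ∑ k, ⟪gradient (fun x => f x (ξ k - yε k)) xhat, z - xhat⟫
      ≤ ∑ k, f z (ξ k - yε k) := by
    rw [← Finset.sum_add_distrib]
    exact Finset.sum_le_sum fun k _ => h2 k
  have hinner : ⟪(1 / (n : ℝ)) • (∑ k, gradient (fun x => f x (ξ k - yε k)) xhat), z - xhat⟫
      = (1 / (n : ℝ)) * ∑ k, ⟪gradient (fun x => f x (ξ k - yε k)) xhat, z - xhat⟫ := by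
    rw [real_inner_smul_left, sum_inner]
  have hmul : (1 / (n : ℝ)) * (∑ k, f xhat (ξ k - yε k)
      + ∑ k, ⟪gradient (fun x => f x (ξ k - yε k)) xhat, z - xhat⟫)
      ≤ (1 / (n : ℝ)) * ∑ k, f z (ξ k - yε k) :=
    mul_le_mul_of_nonneg_left hsum hinvn
  rw [mul_add] at hmul
  rw [hinner]
  linarith
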